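/- Let p, q be real numbers with 0 < p < 1 and 0 < q < 1. Then for every integer m, (−1)^m / (Γ(p+m) · Γ(q−m)) > 0, where Γ is the real Gamma function. (Equivalently, all Fourier coefficients c_m = (−1)^m Γ(p+q−1)/(Γ(p+m)Γ(q−m)) of the kernel of the complementary-series inner product for SU(1,1) have the same sign, so the inner product ⟨·,·⟩_{p|q} is positive definite.) -/

import Mathlib

/-- For `0 < p < 1`, `0 < q < 1` and any integer `m`, the Fourier coefficient factor
`(−1)^m / (Γ(p+m)·Γ(q−m))` of the complementary-series kernel for `SU(1,1)` is positive. -/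
theorem stmt_5 (p q : ℝ) (hp0 : 0 < p) (hp1 : p < 1) (hq0 : 0 < q) (hq1 : q < 1)
    (m : ℤ) :
    0 < (-1 : ℝ) ^ m / (Real.Gamma (p + m) * Real.Gamma (q - m)) := by
  rw [div_pos_iff, ← mul_pos_iff]
  rw [show (-1:ℝ)^m * (Real.Gamma (p + m) * Real.Gamma (q - m))
      = (-1:ℝ)^m * Real.Gamma (p + m) * Real.Gamma (q - m) by ring] at *
  induction m using Int.induction_on with
  | zero => simpa using mul_pos (Real.Gamma_pos_of_pos hp0) (Real.Gamma_pos_of_pos hq0)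
  | succ k ih =>
      have hk : (0:ℝ) ≤ ((k:ℤ):ℝ) := by push_cast; positivity
      have hpk : (0:ℝ) < p + ((k:ℤ):ℝ) := by linarith
      have hqk : q - (((k:ℤ)+1 : ℤ):ℝ) < 0 := by push_cast; linarith
      have e1 : p + (((k:ℤ)+1 : ℤ):ℝ) = (p + ((k:ℤ):ℝ)) + 1 := by push_cast; ring
      have e2 : q - ((k:ℤ):ℝ) = (q - (((k:ℤ)+1 : ℤ):ℝ)) + 1 := by push_cast; ring
      rw [e1, Real.Gamma_add_one (ne_of_gt hpk)]
      rw [e2, Real.Gamma_add_one (ne_of_lt hqk)] at ih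
      rw [show ((-1:ℝ))^((k:ℤ)+1) = -((-1:ℝ))^(k:ℤ) by
        rw [zpow_add_one₀ (by norm_num : (-1:ℝ) ≠ 0)]; ring]
      nlinarith [ih, hpk, hqk, sq_nonneg ((-1:ℝ)^(k:ℤ) * Real.Gamma (p + ((k:ℤ):ℝ)))]
  | pred k ih =>
      have hk : (0:ℝ) ≤ ((k:ℤ):ℝ) := by push_cast; positivity
      have hpk : p + ((-(k:ℤ)-1 : ℤ):ℝ) < 0 := by push_cast; linarith
      have hqk : (0:ℝ) < q - ((-(k:ℤ) : ℤ):ℝ) := by push_cast; linarith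
      have e1 : p + ((-(k:ℤ) : ℤ):ℝ) = (p + ((-(k:ℤ)-1 : ℤ):ℝ)) + 1 := by push_cast; ring
      have e2 : q - ((-(k:ℤ)-1 : ℤ):ℝ) = (q - ((-(k:ℤ) : ℤ):ℝ)) + 1 := by push_cast; ring
      rw [e1, Real.Gamma_add_one (ne_of_lt hpk)] at ih
      rw [e2, Real.Gamma_add_one (ne_of_gt hqk)]
      rw [show ((-1:ℝ))^(-(k:ℤ)-1) = -((-1:ℝ))^(-(k:ℤ)) by
        rw [show (-(k:ℤ)-1) = -(k:ℤ)+(-1) by ring,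
          zpow_add₀ (by norm_num : (-1:ℝ) ≠ 0)]; norm_num]
      nlinarith [ih, hpk, hqk, sq_nonneg ((-1:ℝ)^(-(k:ℤ)) * Real.Gamma (q - ((-(k:ℤ):ℤ):ℝ)))]
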